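/- Let M be a matroid on a ground set of n ≥ 1 elements and let m be an integer with 0 ≤ m < n. Then the coefficients t_{ij}(M) of the Tutte polynomial of M satisfy the linear relation Σ_{α=0}^{m} Σ_{β=0}^{α} (−1)^β · binomial(α,β) · t_{m−α,β}(M) = 0. -/

import Mathlib

open MvPolynomial
open scoped Classical

/-- The dominance order on bit sequences: `Dominates s t` means `s ⊵ t`, i.e. every
prefix of `s` has at least as many `1`s (`true`s) as the corresponding prefix of `t`. -/
def Dominates (s t : List Bool) : Prop :=
  ∀ j : ℕ, (t.take j).count true ≤ (s.take j).count true

/-- The indicator bit sequence of a subset `B` of `{1,…,n}` (modelled as `Fin n`). -/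
def indList {n : ℕ} (B : Finset (Fin n)) : List Bool :=
  List.ofFn fun i : Fin n => decide (i ∈ B)

/-- The finset of `(n,r)`-sequences: bit sequences of length `n` with exactly `r` ones. -/
def seqs (n r : ℕ) : Finset (List Bool) :=
  ((Finset.univ : Finset (Fin n → Bool)).image List.ofFn).filter fun l => l.count true = r

/-- The Tutte polynomial determined by a rank function `rk` on subsets of an `n`-element
ground set, where `r` is the rank of the whole ground set.  The variable `X 0` plays the
role of `x` and `X 1` plays the role of `y`. -/
noncomputable def tutte (K : Type*) [Field K] {n : ℕ} (r : ℕ) (rk : Finset (Fin n) → ℕ) :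
    MvPolynomial (Fin 2) K :=
  ∑ A : Finset (Fin n), (X 0 - 1) ^ (r - rk A) * (X 1 - 1) ^ (A.card - rk A)

/-- `B` is a basis of the freedom matroid `F(s)`: it has `wt s` elements and its
indicator sequence is dominated by `s`. -/
def IsFreedomBasis (s : List Bool) (B : Finset (Fin s.length)) : Prop :=
  B.card = s.count true ∧ Dominates s (indList B)

/-- The rank function of the freedom matroid `F(s)`: the rank of a set is the largest
size of its intersection with a basis. -/
noncomputable def freedomRk (s : List Bool) (A : Finset (Fin s.length)) : ℕ :=
  (Finset.univ.filter fun B => IsFreedomBasis s B).sup fun B => (A ∩ B).card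

/-- The Tutte polynomial of the freedom matroid `F(s)`. -/
noncomputable def freedomTutte (K : Type*) [Field K] (s : List Bool) :
    MvPolynomial (Fin 2) K :=
  tutte K (s.count true) (freedomRk s)

/-- The rank of a set in a matroid: the largest cardinality of an independent subset. -/
noncomputable def mrank {n : ℕ} (M : Matroid (Fin n)) (A : Set (Fin n)) : ℕ :=
  (Finset.univ.filter fun I : Finset (Fin n) =>
    M.Indep ↑I ∧ (↑I : Set (Fin n)) ⊆ A).sup Finset.card

/-- The set `{π(1),…,π(m)}` of the first `m` values of a permutation. -/
def prefFinset {n : ℕ} (π : Equiv.Perm (Fin n)) (m : ℕ) : Finset (Fin n) :=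
  (Finset.univ.filter fun i : Fin n => (i : ℕ) < m).image π

/-- The rank sequence of a permutation `π` with respect to a rank function `rk`:
its `j`-th entry is `1` (`true`) exactly when `rk {π(1),…,π(j)} = rk {π(1),…,π(j-1)} + 1`. -/
def rankSeq {n : ℕ} (rk : Finset (Fin n) → ℕ) (π : Equiv.Perm (Fin n)) : List Bool :=
  List.ofFn fun j : Fin n =>
    decide (rk (prefFinset π ((j : ℕ) + 1)) = rk (prefFinset π (j : ℕ)) + 1)

/-- `gCoeff rk l` is the number of permutations of the ground set whose rank sequence
is the bit sequence `l`; these are the coefficients of the `G`-invariant. -/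
noncomputable def gCoeff {n : ℕ} (rk : Finset (Fin n) → ℕ) (l : List Bool) : ℕ :=
  (Finset.univ.filter fun π : Equiv.Perm (Fin n) => rankSeq rk π = l).card

/-- The `G`-invariant, as an element of the free `K`-module on all bit sequences. -/
noncomputable def Ginv (K : Type*) [Field K] {n : ℕ} (rk : Finset (Fin n) → ℕ) :
    List Bool →₀ K :=
  ∑ π : Equiv.Perm (Fin n), Finsupp.single (rankSeq rk π) 1

/-- The value of the specialization `Sp` on the symbol `[l]`. -/
noncomputable def spPoly (K : Type*) [Field K] (l : List Bool) : MvPolynomial (Fin 2) K :=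
  ∑ m ∈ Finset.range (l.length + 1),
    ((m.factorial * (l.length - m).factorial : ℕ) : K)⁻¹ •
      ((X 0 - 1) ^ (l.count true - (l.take m).count true) *
        (X 1 - 1) ^ (m - (l.take m).count true))

/-- The specialization `Sp` as a linear map on the free module on bit-sequence symbols. -/
noncomputable def SpMap (K : Type*) [Field K] :
    (List Bool →₀ K) →ₗ[K] MvPolynomial (Fin 2) K :=
  Finsupp.linearCombination K (spPoly K)

/-- `G(n,r)`: the span of the `(n,r)`-sequence symbols, a subspace of dimension
`binomial(n,r)` of the free module on all bit sequences. -/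
noncomputable def Gspace (K : Type*) [Field K] (n r : ℕ) : Submodule K (List Bool →₀ K) :=
  Submodule.span K ((fun l => Finsupp.single l (1 : K)) '' ↑(seqs n r))

/-- `T(n,r)`: the span of the Tutte polynomials of all `(n,r)`-matroids. -/
noncomputable def Tspace (K : Type*) [Field K] (n r : ℕ) :
    Submodule K (MvPolynomial (Fin 2) K) :=
  Submodule.span K {p | ∃ M : Matroid (Fin n), M.E = Set.univ ∧ mrank M Set.univ = r ∧
    p = tutte K r fun A : Finset (Fin n) => mrank M ↑A}

/-- The bit sequence `0^a 1^b 0^c 1^d` associated to a quadruple `(a,b,c,d)`;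
such sequences are the join-irreducible ones. -/
def joinList (q : ℕ × ℕ × ℕ × ℕ) : List Bool :=
  List.replicate q.1 false ++ List.replicate q.2.1 true ++
    List.replicate q.2.2.1 false ++ List.replicate q.2.2.2 true

/-- The bit sequence `1^a 0^b 1^c 0^d` associated to a quadruple `(a,b,c,d)`;
such sequences are the meet-irreducible ones. -/
def meetList (q : ℕ × ℕ × ℕ × ℕ) : List Bool :=
  List.replicate q.1 true ++ List.replicate q.2.1 false ++
    List.replicate q.2.2.1 true ++ List.replicate q.2.2.2 false

/-- Quadruples `(a,b,c,d)` with `a+b+c+d = n` and `b+d = r`, indexing the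
join-irreducible `(n,r)`-sequences `0^a 1^b 0^c 1^d`. -/
def joinIdx (n r : ℕ) : Type :=
  {q : ℕ × ℕ × ℕ × ℕ // q.1 + q.2.1 + q.2.2.1 + q.2.2.2 = n ∧ q.2.1 + q.2.2.2 = r}

/-- Quadruples `(a,b,c,d)` with `a+b+c+d = n` and `a+c = r`, indexing the
meet-irreducible `(n,r)`-sequences `1^a 0^b 1^c 0^d`. -/
def meetIdx (n r : ℕ) : Type :=
  {q : ℕ × ℕ × ℕ × ℕ // q.1 + q.2.1 + q.2.2.1 + q.2.2.2 = n ∧ q.1 + q.2.2.1 = r}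

/-- `f(u) = T(F(u); 1, y)`. -/
noncomputable def fEval (K : Type*) [Field K] (u : List Bool) : MvPolynomial (Fin 2) K :=
  MvPolynomial.aeval (fun i : Fin 2 => if i = 0 then 1 else X 1) (freedomTutte K u)

/-- `g(u) = T(F(u); x, 1)`. -/
noncomputable def gEval (K : Type*) [Field K] (u : List Bool) : MvPolynomial (Fin 2) K :=
  MvPolynomial.aeval (fun i : Fin 2 => if i = 0 then X 0 else 1) (freedomTutte K u)

/-- `τ(u) = T(F(u); 1, 1)`. -/
noncomputable def tauEval (K : Type*) [Field K] (u : List Bool) : MvPolynomial (Fin 2) K :=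
  MvPolynomial.aeval (fun _ : Fin 2 => (1 : MvPolynomial (Fin 2) K)) (freedomTutte K u)


section BrylawskiAux

open Finset

set_option maxRecDepth 10000

private lemma bryl_neg_one_pow_sub (K : Type*) [Field K] {t p : ℕ} (h : t ≤ p) :
    ((-1:K)) ^ (p - t) = (-1) ^ (p + t) := by
  have hpt : p + t = (p - t) + 2 * t := by omega
  rw [hpt, pow_add, pow_mul]; simp

private lemma bryl_expand_pow (K : Type*) [Field K] (c : Fin 2) (p : ℕ) :
    (X c - 1 : MvPolynomial (Fin 2) K) ^ p =
      ∑ t ∈ Finset.range (p+1),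
        MvPolynomial.monomial (Finsupp.single c t) ((-1:K)^(p+t) * p.choose t) := by
  have h : (X c - 1 : MvPolynomial (Fin 2) K) = X c + MvPolynomial.C (-1) := by
    rw [map_neg, map_one]; ring
  rw [h, add_pow]
  refine Finset.sum_congr rfl fun t ht => ?_
  rw [Finset.mem_range] at ht
  have ht' : t ≤ p := Nat.lt_succ_iff.mp ht
  rw [X_pow_eq_monomial, ← map_pow, bryl_neg_one_pow_sub K ht']
  rw [← MvPolynomial.C_eq_coe_nat]
  rw [mul_assoc, ← map_mul, mul_comm ((MvPolynomial.monomial _) _) _, C_mul_monomial, mul_one]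

private lemma bryl_single_add_single_eq (t s i j : ℕ) :
    (Finsupp.single (0:Fin 2) t + Finsupp.single 1 s = Finsupp.single 0 i + Finsupp.single 1 j)
      ↔ (t = i ∧ s = j) := by
  constructor
  · intro h
    constructor
    · have h0 := DFunLike.congr_fun h 0
      simpa [Finsupp.single_apply] using h0
    · have h1 := DFunLike.congr_fun h 1
      simpa [Finsupp.single_apply] using h1
  · rintro ⟨rfl, rfl⟩; rfl

private lemma bryl_coeff_prod (K : Type*) [Field K] (p q i j : ℕ) :
    MvPolynomial.coeff (Finsupp.single (0:Fin 2) i + Finsupp.single 1 j)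
      ((X 0 - 1 : MvPolynomial (Fin 2) K)^p * (X 1 - 1)^q)
    = ((-1:K)^(p+i) * p.choose i) * ((-1:K)^(q+j) * q.choose j) := by
  rw [bryl_expand_pow, bryl_expand_pow, Finset.sum_mul_sum]
  simp_rw [monomial_mul, MvPolynomial.coeff_sum, MvPolynomial.coeff_monomial,
    bryl_single_add_single_eq]
  rcases le_or_gt i p with hi | hi
  · rcases le_or_gt j q with hj | hj
    · rw [Finset.sum_eq_single i]
      · rw [Finset.sum_eq_single j]
        · simp
        · intro s _ hs; simp [hs]
        · intro hj'; exact absurd (Finset.mem_range.mpr (by omega)) hj'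
      · intro t _ ht
        apply Finset.sum_eq_zero; intro s _; simp [ht]
      · intro hi'; exact absurd (Finset.mem_range.mpr (by omega)) hi'
    · rw [Nat.choose_eq_zero_of_lt hj]
      push_cast
      rw [mul_zero, mul_zero]
      apply Finset.sum_eq_zero; intro t _
      apply Finset.sum_eq_zero; intro s hs
      rw [Finset.mem_range] at hs
      have : ¬ (t = i ∧ s = j) := by rintro ⟨rfl, rfl⟩; omega
      simp [this]
  · rw [Nat.choose_eq_zero_of_lt hi]
    push_cast
    rw [mul_zero, zero_mul]
    apply Finset.sum_eq_zero; intro t ht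
    apply Finset.sum_eq_zero; intro s _
    rw [Finset.mem_range] at ht
    have : ¬ (t = i ∧ s = j) := by rintro ⟨rfl, rfl⟩; omega
    simp [this]

private lemma bryl_poly_coeff_one_sub_pow (K : Type*) [Field K] (p u : ℕ) :
    ((1 - Polynomial.X : Polynomial K) ^ p).coeff u = (-1:K)^u * p.choose u := by
  have h : (1 - Polynomial.X : Polynomial K) = (-1 : K) • (Polynomial.X + Polynomial.C (-1)) := by
    simp [Polynomial.smul_eq_C_mul]; ring
  rw [h, smul_pow, Polynomial.coeff_smul, Polynomial.coeff_X_add_C_pow]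
  rcases le_or_gt u p with hu | hu
  · have hsgn : (-1:K)^(p-u) = (-1)^p * (-1)^u := by
      have hpu : p = (p - u) + u := by omega
      nth_rewrite 2 [hpu]
      rw [pow_add, mul_assoc, ← pow_add]
      simp
    rw [hsgn, smul_eq_mul]
    have hsq : ((-1:K)^p)^2 = 1 := by
      rw [← pow_mul, mul_comm p 2, pow_mul]; norm_num
    calc (-1:K)^p * ((-1)^p * (-1)^u * (p.choose u : K))
        = ((-1:K)^p)^2 * ((-1)^u * (p.choose u : K)) := by ring
      _ = (-1)^u * (p.choose u : K) := by rw [hsq, one_mul]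
  · rw [Nat.choose_eq_zero_of_lt hu]; simp

private lemma bryl_ps_coeff (K : Type*) [Field K] (p u : ℕ) :
    (PowerSeries.coeff (R := K) u) ((1 - PowerSeries.X : PowerSeries K) ^ p)
      = (-1:K)^u * p.choose u := by
  have h : ((1 - PowerSeries.X : PowerSeries K) ^ p)
      = (((1 - Polynomial.X : Polynomial K) ^ p : Polynomial K) : PowerSeries K) := by
    rw [Polynomial.coe_pow, Polynomial.coe_sub, Polynomial.coe_one, Polynomial.coe_X]
  rw [h, Polynomial.coeff_coe, bryl_poly_coeff_one_sub_pow]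

private lemma bryl_vand (a q : ℕ) :
    ∑ b ∈ Finset.range (a+1), a.choose b * q.choose b = (a+q).choose a := by
  rw [Nat.add_choose_eq, Finset.Nat.sum_antidiagonal_eq_sum_range_succ_mk]
  conv_lhs => rw [← Finset.sum_range_reflect]
  refine Finset.sum_congr rfl fun j hj => ?_
  rw [Finset.mem_range, Nat.lt_succ_iff] at hj
  simp only [Nat.add_sub_cancel]
  rw [Nat.choose_symm hj]

private lemma bryl_coeff_prod_ps (K : Type*) [Field K] (p q m : ℕ) :
    (PowerSeries.coeff (R := K) m) ((1 - PowerSeries.X)^p * (PowerSeries.invOneSubPow K (q+1)).val)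
    = ∑ a ∈ Finset.range (m+1), ((-1:K)^a * p.choose a) * ((q + (m-a)).choose q : K) := by
  rw [PowerSeries.coeff_mul, Finset.Nat.sum_antidiagonal_eq_sum_range_succ_mk]
  refine Finset.sum_congr rfl fun a ha => ?_
  rw [bryl_ps_coeff, PowerSeries.invOneSubPow_val_succ_eq_mk_add_choose, PowerSeries.coeff_mk]

private lemma bryl_shift (K : Type*) [Field K] (p q k e : ℕ) (hq : q ≤ e)
    (hpk : p + (e - q) = k) :
    (1 - PowerSeries.X : PowerSeries K)^p * (PowerSeries.invOneSubPow K (q+1)).val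
    = (1 - PowerSeries.X)^k * (PowerSeries.invOneSubPow K (e+1)).val := by
  have hne : ((1 - PowerSeries.X : PowerSeries K)^(e+1)) ≠ 0 := by
    apply pow_ne_zero
    intro h
    have := congrArg (PowerSeries.constantCoeff (R := K)) h
    simp at this
  apply mul_right_cancel₀ hne
  have hG : ∀ d : ℕ, (PowerSeries.invOneSubPow K (d+1)).val * (1 - PowerSeries.X)^(d+1) = 1 := by
    intro d
    rw [← PowerSeries.invOneSubPow_inv_eq_one_sub_pow]
    exact (PowerSeries.invOneSubPow K (d+1)).val_inv
  calc (1 - PowerSeries.X : PowerSeries K)^p * (PowerSeries.invOneSubPow K (q+1)).val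
        * (1 - PowerSeries.X)^(e+1)
      = (1 - PowerSeries.X)^p * (1 - PowerSeries.X)^(e-q) *
        ((PowerSeries.invOneSubPow K (q+1)).val * (1 - PowerSeries.X)^(q+1)) := by
        rw [show e + 1 = (q+1) + (e-q) by omega, pow_add]; ring
    _ = (1 - PowerSeries.X)^k := by rw [hG, mul_one, ← pow_add, hpk]
    _ = (1 - PowerSeries.X)^k *
        ((PowerSeries.invOneSubPow K (e+1)).val * (1 - PowerSeries.X)^(e+1)) := by
        rw [hG, mul_one]
    _ = (1 - PowerSeries.X)^k * (PowerSeries.invOneSubPow K (e+1)).val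
        * (1 - PowerSeries.X)^(e+1) := by ring

private lemma bryl_Fval (K : Type*) [Field K] (m p q : ℕ) :
    ∑ a ∈ Finset.range (m+1), ∑ b ∈ Finset.range (a+1),
      (-1:K)^b * (a.choose b : K) *
        (((-1:K)^(p+(m-a)) * (p.choose (m-a) : K)) * ((-1:K)^(q+b) * (q.choose b : K)))
    = (-1:K)^(p+q) *
      (PowerSeries.coeff (R := K) m)
        ((1 - PowerSeries.X)^p * (PowerSeries.invOneSubPow K (q+1)).val) := by
  rw [bryl_coeff_prod_ps, Finset.mul_sum]
  conv_rhs => rw [← Finset.sum_range_reflect]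
  refine Finset.sum_congr rfl fun a ha => ?_
  rw [Finset.mem_range, Nat.lt_succ_iff] at ha
  simp only [Nat.add_sub_cancel]
  rw [Nat.sub_sub_self ha]
  have hbb : ∀ b : ℕ, (-1:K)^b * (-1:K)^b = 1 := fun b => by
    rw [← pow_add, ← two_mul, pow_mul]; norm_num
  have hstep : ∀ b : ℕ, (-1:K)^b * (a.choose b : K) *
        (((-1:K)^(p+(m-a)) * (p.choose (m-a) : K)) * ((-1:K)^(q+b) * (q.choose b : K)))
      = ((-1:K)^q * ((-1:K)^(p+(m-a)) * (p.choose (m-a) : K))) *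
          ((a.choose b : K) * (q.choose b : K)) := by
    intro b
    rw [pow_add (-1:K) q b]
    calc (-1:K)^b * (a.choose b : K) *
          (((-1:K)^(p+(m-a)) * (p.choose (m-a) : K)) *
            ((-1:K)^q * (-1:K)^b * (q.choose b : K)))
        = ((-1:K)^b * (-1:K)^b) * (((-1:K)^q * ((-1:K)^(p+(m-a)) * (p.choose (m-a) : K))) *
            ((a.choose b : K) * (q.choose b : K))) := by ring
      _ = _ := by rw [hbb, one_mul]
  rw [Finset.sum_congr rfl fun b _ => hstep b, ← Finset.mul_sum]
  have hv : ∑ b ∈ Finset.range (a+1), (a.choose b : K) * (q.choose b : K)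
      = ((a+q).choose a : K) := by
    rw [← bryl_vand]; push_cast; ring
  rw [hv]
  have hch : (a+q).choose a = (q+a).choose q := by
    rw [add_comm a q, ← Nat.choose_symm (Nat.le_add_left a q)]
    congr 1
    omega
  rw [hch, pow_add (-1:K) p q, pow_add (-1:K) p (m-a)]
  ring

private lemma bryl_mrank_le_card {n : ℕ} (M : Matroid (Fin n)) (A : Finset (Fin n)) :
    mrank M ↑A ≤ A.card := by
  apply Finset.sup_le
  intro I hI
  rw [Finset.mem_filter] at hI
  exact Finset.card_le_card (by exact_mod_cast hI.2.2)

private lemma bryl_mrank_mono {n : ℕ} (M : Matroid (Fin n)) (A : Finset (Fin n)) :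
    mrank M ↑A ≤ mrank M Set.univ := by
  apply Finset.sup_mono
  intro I hI
  rw [Finset.mem_filter] at hI ⊢
  exact ⟨hI.1, hI.2.1, Set.subset_univ _⟩

private lemma bryl_mrank_corank {n : ℕ} (M : Matroid (Fin n)) (A : Finset (Fin n)) :
    mrank M Set.univ + A.card ≤ mrank M ↑A + n := by
  have hne : (Finset.univ.filter fun I : Finset (Fin n) =>
      M.Indep ↑I ∧ (↑I : Set (Fin n)) ⊆ Set.univ).Nonempty := by
    refine ⟨∅, ?_⟩
    rw [Finset.mem_filter]
    exact ⟨Finset.mem_univ _, by simpa using M.empty_indep, Set.subset_univ _⟩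
  obtain ⟨I, hI, hIsup⟩ := Finset.exists_mem_eq_sup _ hne Finset.card
  rw [Finset.mem_filter] at hI
  have hind : M.Indep ↑I := hI.2.1
  have hIA : (I ∩ A).card ≤ mrank M ↑A := by
    apply Finset.le_sup
    rw [Finset.mem_filter]
    refine ⟨Finset.mem_univ _, hind.subset ?_, ?_⟩
    · exact_mod_cast Finset.inter_subset_left
    · exact_mod_cast Finset.inter_subset_right
  have hcard : (I ∩ A).card + (I \ A).card = I.card := Finset.card_inter_add_card_sdiff I A
  have hsd : (I \ A).card ≤ n - A.card := by
    have h1 : I \ A ⊆ Aᶜ := by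
      intro x hx
      rw [Finset.mem_sdiff] at hx
      simpa using hx.2
    have h2 := Finset.card_le_card h1
    rwa [Finset.card_compl, Fintype.card_fin] at h2
  have hAn : A.card ≤ n := by simpa using Finset.card_le_card (Finset.subset_univ A)
  have hsup : mrank M Set.univ = I.card := hIsup
  omega

end BrylawskiAux

/-- (Brylawski's relations.)  For a matroid `M` on `n ≥ 1` elements and
`0 ≤ m < n`, the coefficients `t_{ij}` of the Tutte polynomial of `M` satisfy
`Σ_{α=0}^{m} Σ_{β=0}^{α} (−1)^β C(α,β) t_{m−α,β} = 0`. -/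
theorem brylawski_relation (K : Type*) [Field K] (n : ℕ) (hn : 1 ≤ n)
    (M : Matroid (Fin n)) (hE : M.E = Set.univ) (m : ℕ) (hm : m < n) :
    ∑ a ∈ Finset.range (m + 1), ∑ b ∈ Finset.range (a + 1),
      (-1 : K) ^ b * (a.choose b : K) *
        MvPolynomial.coeff (Finsupp.single (0 : Fin 2) (m - a) + Finsupp.single 1 b)
          (tutte K (mrank M Set.univ) (fun A : Finset (Fin n) => mrank M ↑A)) = 0 := by
  classical
  set r := mrank M Set.univ with hrdef
  set rk : Finset (Fin n) → ℕ := fun A : Finset (Fin n) => mrank M ↑A with hrkdef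
  set e := n - r with hedef
  set H := (PowerSeries.invOneSubPow K (e+1)).val with hHdef
  have hrk_le_r : ∀ A : Finset (Fin n), rk A ≤ r := fun A => bryl_mrank_mono M A
  have hrk_le_card : ∀ A : Finset (Fin n), rk A ≤ A.card := fun A => bryl_mrank_le_card M A
  have hcorank : ∀ A : Finset (Fin n), r + A.card ≤ rk A + n := fun A => bryl_mrank_corank M A
  have hAn : ∀ A : Finset (Fin n), A.card ≤ n := fun A => by
    simpa using Finset.card_le_card (Finset.subset_univ A)
  have hrn : r ≤ n := by
    have h := bryl_mrank_le_card M (Finset.univ : Finset (Fin n))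
    rw [Finset.coe_univ] at h
    simpa using h
  have hsgn2 : ∀ x y : ℕ, (-1:K)^(x + 2*y) = (-1)^x := by
    intro x y; rw [pow_add, pow_mul]; norm_num
  have hco : ∀ a b : ℕ,
      MvPolynomial.coeff (Finsupp.single (0:Fin 2) (m-a) + Finsupp.single 1 b)
        (tutte K r rk)
      = ∑ A : Finset (Fin n),
          ((-1:K)^((r - rk A)+(m-a)) * ((r - rk A).choose (m-a) : K)) *
          ((-1:K)^((A.card - rk A)+b) * ((A.card - rk A).choose b : K)) := by
    intro a b
    rw [tutte, MvPolynomial.coeff_sum]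
    exact Finset.sum_congr rfl fun A _ => bryl_coeff_prod K _ _ _ _
  calc ∑ a ∈ Finset.range (m + 1), ∑ b ∈ Finset.range (a + 1),
      (-1 : K) ^ b * (a.choose b : K) *
        MvPolynomial.coeff (Finsupp.single (0 : Fin 2) (m - a) + Finsupp.single 1 b)
          (tutte K r rk)
      = ∑ a ∈ Finset.range (m + 1), ∑ b ∈ Finset.range (a + 1), ∑ A : Finset (Fin n),
          (-1 : K) ^ b * (a.choose b : K) *
            (((-1:K)^((r - rk A)+(m-a)) * ((r - rk A).choose (m-a) : K)) *
             ((-1:K)^((A.card - rk A)+b) * ((A.card - rk A).choose b : K))) := by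
        refine Finset.sum_congr rfl fun a _ => Finset.sum_congr rfl fun b _ => ?_
        rw [hco a b, Finset.mul_sum]
    _ = ∑ A : Finset (Fin n), ∑ a ∈ Finset.range (m + 1), ∑ b ∈ Finset.range (a + 1),
          (-1 : K) ^ b * (a.choose b : K) *
            (((-1:K)^((r - rk A)+(m-a)) * ((r - rk A).choose (m-a) : K)) *
             ((-1:K)^((A.card - rk A)+b) * ((A.card - rk A).choose b : K))) := by
        rw [Finset.sum_congr rfl fun a _ => Finset.sum_comm]
        exact Finset.sum_comm
    _ = ∑ A : Finset (Fin n),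
          (-1:K)^((r - rk A) + (A.card - rk A)) *
            (PowerSeries.coeff (R := K) m)
              ((1 - PowerSeries.X)^(r - rk A) *
                (PowerSeries.invOneSubPow K ((A.card - rk A)+1)).val) := by
        exact Finset.sum_congr rfl fun A _ => bryl_Fval K m (r - rk A) (A.card - rk A)
    _ = ∑ A : Finset (Fin n),
          (-1:K)^(r + A.card) *
            (PowerSeries.coeff (R := K) m) ((1 - PowerSeries.X)^(n - A.card) * H) := by
        refine Finset.sum_congr rfl fun A _ => ?_
        have h1 := hrk_le_r A
        have h2 := hrk_le_card A
        have h3 := hcorank A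
        have h4 := hAn A
        have hq : A.card - rk A ≤ e := by omega
        have hpk : (r - rk A) + (e - (A.card - rk A)) = n - A.card := by omega
        rw [bryl_shift K _ _ _ _ hq hpk, ← hHdef]
        congr 1
        have hx : r + A.card = ((r - rk A) + (A.card - rk A)) + 2 * rk A := by omega
        rw [hx, hsgn2]
    _ = (PowerSeries.coeff (R := K) m) (∑ A : Finset (Fin n),
          PowerSeries.C (R := K) ((-1:K)^(r + A.card)) * ((1 - PowerSeries.X)^(n - A.card) * H)) := by
        rw [map_sum]
        exact Finset.sum_congr rfl fun A _ => (PowerSeries.coeff_C_mul _ _ _).symm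
    _ = 0 := by
        have hC : ∀ j : ℕ, PowerSeries.C (R := K) ((-1:K)^j) = (-1 : PowerSeries K)^j := by
          intro j; rw [map_pow, map_neg, map_one]
        have hsplit : ∀ A : Finset (Fin n),
            PowerSeries.C (R := K) ((-1:K)^(r + A.card)) * ((1 - PowerSeries.X)^(n - A.card) * H)
            = ((-1 : PowerSeries K)^r * H) *
                ((-1 : PowerSeries K)^(A.card) * (1 - PowerSeries.X)^(n - A.card)) := by
          intro A
          rw [pow_add, map_mul, hC, hC]; ring
        rw [Finset.sum_congr rfl fun A _ => hsplit A, ← Finset.mul_sum]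
        have hprod := Fintype.prod_add (fun _ : Fin n => (-1 : PowerSeries K))
          (fun _ : Fin n => (1 - PowerSeries.X : PowerSeries K))
        have hterm : ∀ t : Finset (Fin n),
            (∏ _a ∈ t, (-1 : PowerSeries K)) * ∏ _a ∈ tᶜ, (1 - PowerSeries.X : PowerSeries K)
            = (-1 : PowerSeries K)^(t.card) * (1 - PowerSeries.X)^(n - t.card) := by
          intro t
          rw [Finset.prod_const, Finset.prod_const, Finset.card_compl, Fintype.card_fin]
        have hS : ∑ A : Finset (Fin n),
            (-1 : PowerSeries K)^(A.card) * (1 - PowerSeries.X)^(n - A.card)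
            = (PowerSeries.X : PowerSeries K)^n * (-1 : PowerSeries K)^n := by
          rw [← Finset.sum_congr rfl fun t _ => hterm t, ← hprod]
          have : ∀ _a : Fin n, (-1 : PowerSeries K) + (1 - PowerSeries.X) = -PowerSeries.X := by
            intro _a; ring
          rw [Finset.prod_congr rfl fun a _ => this a, Finset.prod_const,
            Finset.card_univ, Fintype.card_fin, show (-PowerSeries.X : PowerSeries K)
              = PowerSeries.X * (-1) by ring, mul_pow]
        rw [hS]
        have hdvd : (PowerSeries.X : PowerSeries K)^n ∣
            ((-1 : PowerSeries K)^r * H) * ((PowerSeries.X : PowerSeries K)^n *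
              (-1 : PowerSeries K)^n) :=
          ⟨(-1 : PowerSeries K)^n * ((-1 : PowerSeries K)^r * H), by ring⟩
        exact PowerSeries.X_pow_dvd_iff.mp hdvd m hm
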